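/- Assume F ⊆ Hom(S¹) and that the collection K_F of F-invariant minimal sets is finite with at least two elements. Then for every K ∈ K_F, the family E_K is finite. -/

import Mathlib

open MeasureTheory Set Function Filter Topology
open scoped ENNReal NNReal

noncomputable section

/-- The circle, modeled as `ℝ/ℤ`, with its (arc-length) quotient metric. -/
abbrev S1 : Type := AddCircle (1 : ℝ)

/-- The representative in `[0,1)` of a point of the circle. -/
def argS1 (x : S1) : ℝ := (AddCircle.equivIco 1 0 x : ℝ)

/-- The open arc traversed counterclockwise from `a` to `b`. -/
def openArc (a b : S1) : Set S1 := {x | 0 < argS1 (x - a) ∧ argS1 (x - a) < argS1 (b - a)}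

/-- The closed arc traversed counterclockwise from `a` to `b`; note `[a,a] = {a}`. -/
def closedArc (a b : S1) : Set S1 := insert a (insert b (openArc a b))

/-- Homeomorphisms of the circle. -/
abbrev HomS1 : Type := S1 ≃ₜ S1

/-- A circle homeomorphism is orientation preserving if it maps counterclockwise open
arcs onto counterclockwise open arcs. -/
def OrientationPreserving (f : HomS1) : Prop :=
  ∀ a b : S1, f '' openArc a b = openArc (f a) (f b)

/-- Membership in the semigroup generated by `F` (all finite compositions of members). -/
inductive InSemigroup (F : Set HomS1) : HomS1 → Prop
  | base : ∀ f ∈ F, InSemigroup F f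
  | comp : ∀ f g : HomS1, InSemigroup F f → InSemigroup F g → InSemigroup F (g.trans f)

/-- The semigroup `G_F` generated by `F`, as a set of homeomorphisms. -/
def semigroupOf (F : Set HomS1) : Set HomS1 := {g | InSemigroup F g}

/-- The orbit of `x` under the semigroup generated by `F`. -/
def orbitOf (F : Set HomS1) (x : S1) : Set S1 := {y | ∃ g ∈ semigroupOf F, g x = y}

/-- The semigroup generated by `F` has no finite orbit. -/
def NoFiniteOrbit (F : Set HomS1) : Prop := ∀ x : S1, (orbitOf F x).Infinite

/-- A set `K` is `F`-invariant if every `f ∈ F` maps it into itself. -/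
def InvariantUnder (F : Set HomS1) (K : Set S1) : Prop := ∀ f ∈ F, f '' K ⊆ K

/-- A nonempty closed `F`-invariant set having no nonempty closed `F`-invariant
proper subset. -/
def IsMinimalInvariant (F : Set HomS1) (K : Set S1) : Prop :=
  K.Nonempty ∧ IsClosed K ∧ InvariantUnder F K ∧
    ∀ K' ⊆ K, K'.Nonempty → IsClosed K' → InvariantUnder F K' → K' = K

/-- The collection `K_F` of `F`-invariant minimal sets. -/
def minimalSets (F : Set HomS1) : Set (Set S1) := {K | IsMinimalInvariant F K}

/-- The semigroup generated by `F` acts proximally on `I`. -/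
def ProximalOn (F : Set HomS1) (I : Set S1) : Prop :=
  ∀ x ∈ I, ∀ y ∈ I, ∃ g : ℕ → HomS1, (∀ n, g n ∈ semigroupOf F) ∧
    Tendsto (fun n => dist (g n x) (g n y)) atTop (𝓝 0)

/-- `L` is a finite union of closed arcs with endpoints in `K`. -/
def FiniteUnionOfArcsWithEndsIn (K L : Set S1) : Prop :=
  ∃ (n : ℕ) (a b : Fin n → S1), (∀ k, a k ∈ K) ∧ (∀ k, b k ∈ K) ∧
    L = ⋃ k, closedArc (a k) (b k)

/-- `L` is a finite union of closed arcs. -/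
def FiniteUnionOfClosedArcs (L : Set S1) : Prop :=
  ∃ (n : ℕ) (a b : Fin n → S1), L = ⋃ k, closedArc (a k) (b k)

/-- The number of connected components of `L ⊆ S¹`. -/
def numComponents (L : Set S1) : ℕ :=
  {C : Set S1 | ∃ x ∈ L, C = connectedComponentIn L x}.ncard

/-- `x` precedes `y` in the counterclockwise order of an arc starting at `a`. -/
def arcLE (a x y : S1) : Prop := argS1 (x - a) ≤ argS1 (y - a)

/-- `u` is monotone increasing on the closed arc `[a,b]` (counterclockwise order). -/
def MonotoneIncrOnArc (u : S1 → ℝ) (a b : S1) : Prop :=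
  ∀ x ∈ closedArc a b, ∀ y ∈ closedArc a b, arcLE a x y → u x ≤ u y

/-- `u` is monotone decreasing on the closed arc `[a,b]` (counterclockwise order). -/
def MonotoneDecrOnArc (u : S1 → ℝ) (a b : S1) : Prop :=
  ∀ x ∈ closedArc a b, ∀ y ∈ closedArc a b, arcLE a x y → u y ≤ u x

/-- A closed arc with endpoints in the minimal set `K` and disjoint from every other
minimal set of `F`. -/
def IsGapArc (F : Set HomS1) (K I : Set S1) : Prop :=
  (∃ x ∈ K, ∃ y ∈ K, I = closedArc x y) ∧
    ∀ K' ∈ minimalSets F, K' ≠ K → I ∩ K' = ∅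

/-- The family `E_K`: the maximal closed arcs with endpoints in `K` whose union is
disjoint from every other minimal set. -/
def EK (F : Set HomS1) (K : Set S1) : Set (Set S1) :=
  {I | IsGapArc F K I ∧ ∀ J, IsGapArc F K J → I ⊆ J → J = I}


section Aux

lemma argS1_mem_Ico (z : S1) : argS1 z ∈ Set.Ico (0:ℝ) 1 := by
  have h := (AddCircle.equivIco 1 0 z).2
  simpa [argS1] using h

lemma argS1_coe (r : ℝ) : argS1 (r : S1) = Int.fract r := by
  have h := AddCircle.coe_equivIco_mk_apply (p := (1:ℝ)) r
  simpa [argS1] using h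

lemma coe_argS1 (z : S1) : ((argS1 z : ℝ) : S1) = z := by
  induction z using QuotientAddGroup.induction_on with
  | H r =>
    rw [argS1_coe]
    have : ((Int.fract r : ℝ) : S1) = ((r : ℝ) : S1) := by
      rw [QuotientAddGroup.eq]
      refine AddSubgroup.mem_zmultiples_iff.mpr ⟨⌊r⌋, ?_⟩
      rw [zsmul_eq_mul, mul_one]
      linarith [Int.floor_add_fract r]
    exact this

lemma argS1_injective : Function.Injective argS1 := by
  intro u v h
  rw [← coe_argS1 u, ← coe_argS1 v, h]

lemma argS1_zero : argS1 (0 : S1) = 0 := by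
  have : ((0:ℝ) : S1) = 0 := by norm_cast
  rw [← this, argS1_coe]
  simp

lemma argS1_sub (u v : S1) : argS1 (u - v) = Int.fract (argS1 u - argS1 v) := by
  conv_lhs => rw [← coe_argS1 u, ← coe_argS1 v]
  have : ((argS1 u : ℝ) : S1) - ((argS1 v : ℝ) : S1) = ((argS1 u - argS1 v : ℝ) : S1) := by
    norm_cast
  rw [this, argS1_coe]

lemma mem_closedArc {a b z : S1} :
    z ∈ closedArc a b ↔ argS1 (z - a) ≤ argS1 (b - a) := by
  simp only [closedArc, openArc, Set.mem_insert_iff, Set.mem_setOf_eq]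
  constructor
  · rintro (rfl | rfl | ⟨h1, h2⟩)
    · rw [sub_self, argS1_zero]; exact (argS1_mem_Ico _).1
    · exact le_refl _
    · exact h2.le
  · intro h
    rcases eq_or_lt_of_le ((argS1_mem_Ico (z - a)).1) with h0 | h0
    · left
      have : z - a = 0 := argS1_injective (by rw [← h0, argS1_zero])
      rw [sub_eq_zero] at this; exact this
    · rcases eq_or_lt_of_le h with he | hlt
      · right; left
        have : z - a = b - a := argS1_injective he
        exact sub_left_injective this
      · exact Or.inr (Or.inr ⟨h0, hlt⟩)

lemma norm_coe_le_S1 (r : ℝ) : ‖(r : S1)‖ ≤ |r| :=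
  QuotientAddGroup.norm_mk_le_norm (S := AddSubgroup.zmultiples (1:ℝ)) (m := r)

lemma minimal_inter_empty {F : Set HomS1} {K1 K2 : Set S1}
    (h1 : IsMinimalInvariant F K1) (h2 : IsMinimalInvariant F K2) (hne : K1 ≠ K2) :
    K1 ∩ K2 = ∅ := by
  by_contra h
  have hne' : (K1 ∩ K2).Nonempty := Set.nonempty_iff_ne_empty.mpr h
  have hinv : InvariantUnder F (K1 ∩ K2) := by
    intro f hf z hz
    obtain ⟨w, hw, rfl⟩ := hz
    exact ⟨h1.2.2.1 f hf ⟨w, hw.1, rfl⟩, h2.2.2.1 f hf ⟨w, hw.2, rfl⟩⟩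
  have hcl : IsClosed (K1 ∩ K2) := h1.2.1.inter h2.2.1
  have e1 := h1.2.2.2 _ Set.inter_subset_left hne' hcl hinv
  have e2 := h2.2.2.2 _ Set.inter_subset_right hne' hcl hinv
  exact hne (e1 ▸ e2)

lemma sep_of_disjoint {K K' : Set S1} (hK : IsClosed K) (hKne : K.Nonempty)
    (hK' : IsClosed K') (hK'ne : K'.Nonempty) (hdis : K ∩ K' = ∅) :
    ∃ ε > 0, ∀ p ∈ K, ∀ q ∈ K', ε ≤ dist p q := by
  obtain ⟨p₀, hp₀, hmin⟩ := hK.isCompact.exists_isMinOn hKne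
    ((Metric.continuous_infDist_pt K').continuousOn)
  refine ⟨Metric.infDist p₀ K', ?_, ?_⟩
  · refine (hK'.notMem_iff_infDist_pos hK'ne).mp ?_
    intro hp
    exact absurd hdis (by rw [Set.eq_empty_iff_forall_notMem]; push_neg; exact ⟨p₀, hp₀, hp⟩)
  · intro p hp q hq
    exact le_trans (isMinOn_iff.mp hmin p hp) (Metric.infDist_le_dist_of_mem hq)

end Aux

/-- **Lemma 3.2.** If the collection of `F`-invariant minimal sets is finite with at
least two elements, then for every minimal set `K` the family `E_K` is finite. -/
theorem statement5 (F : Set HomS1) (hfin : (minimalSets F).Finite)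
    (hcard : 2 ≤ (minimalSets F).ncard) :
    ∀ K ∈ minimalSets F, (EK F K).Finite := by
  intro K hK
  classical
  -- a second minimal set
  obtain ⟨K₀, hK₀mem, hK₀ne⟩ : ∃ K₀, K₀ ∈ minimalSets F ∧ K₀ ≠ K :=
    Set.exists_ne_of_one_lt_ncard (by omega) K
  -- the separation constant δ
  set S : Set (Set S1) := minimalSets F \ {K} with hS
  have hSfin : S.Finite := hfin.subset Set.diff_subset
  have hsep : ∀ K' ∈ S, ∃ ε > 0, ∀ p ∈ K, ∀ q ∈ K', ε ≤ dist p q := by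
    intro K' hK'
    have hdisj : K ∩ K' = ∅ := minimal_inter_empty hK hK'.1 (Ne.symm hK'.2)
    exact sep_of_disjoint hK.2.1 hK.1 hK'.1.2.1 hK'.1.1 hdisj
  choose! ε hεpos hεsep using hsep
  have hTne : hSfin.toFinset.Nonempty :=
    ⟨K₀, hSfin.mem_toFinset.mpr ⟨hK₀mem, hK₀ne⟩⟩
  set δ : ℝ := hSfin.toFinset.inf' hTne ε with hδ
  have hδpos : 0 < δ := by
    rw [hδ, Finset.lt_inf'_iff]
    intro K' hK'
    exact hεpos K' (hSfin.mem_toFinset.mp hK')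
  have hδle : ∀ K' ∈ minimalSets F, K' ≠ K → ∀ p ∈ K, ∀ q ∈ K', δ ≤ dist p q := by
    intro K' h1 h2 p hp q hq
    have hmem : K' ∈ S := ⟨h1, h2⟩
    exact le_trans (Finset.inf'_le ε (hSfin.mem_toFinset.mpr hmem)) (hεsep K' hmem p hp q hq)
  -- choose endpoints for each arc
  have hrep : ∀ I ∈ EK F K, ∃ x y : S1, x ∈ K ∧ y ∈ K ∧ I = closedArc x y := by
    intro I hI
    obtain ⟨x, hx, y, hy, h⟩ := hI.1.1
    exact ⟨x, y, hx, hy, h⟩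
  choose! xx yy hxmem hymem hrepeq using hrep
  -- points close (counterclockwise) to a point of K avoid other minimal sets
  have hnear : ∀ p ∈ K, ∀ z : S1, argS1 (z - p) < δ →
      ∀ K' ∈ minimalSets F, K' ≠ K → z ∉ K' := by
    intro p hp z hz K' hK' hKne' hzK'
    have h1 : dist z p ≤ argS1 (z - p) := by
      calc dist z p = ‖((argS1 (z - p) : ℝ) : S1)‖ := by rw [dist_eq_norm, coe_argS1]
        _ ≤ |argS1 (z - p)| := norm_coe_le_S1 _
        _ = argS1 (z - p) := abs_of_nonneg (argS1_mem_Ico _).1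
    have h2 : δ ≤ dist p z := hδle K' hK' hKne' p hp z hzK'
    rw [dist_comm] at h2
    linarith
  -- the key separation lemma for starting points
  have key : ∀ I ∈ EK F K, ∀ J ∈ EK F K, I ≠ J → δ ≤ argS1 (xx I - xx J) := by
    intro I hI J hJ hne
    by_contra hlt
    push_neg at hlt
    set x := xx I with hx
    set y := yy I with hy
    set x' := xx J with hx'
    set y' := yy J with hy'
    set a := argS1 (x - x') with ha
    set b := argS1 (y - x') with hb
    set c := argS1 (y' - x') with hc
    have ha0 : 0 ≤ a := (argS1_mem_Ico _).1
    have ha1 : a < 1 := (argS1_mem_Ico _).2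
    have hb0 : 0 ≤ b := (argS1_mem_Ico _).1
    have hb1 : b < 1 := (argS1_mem_Ico _).2
    have hc0 : 0 ≤ c := (argS1_mem_Ico _).1
    have hc1 : c < 1 := (argS1_mem_Ico _).2
    have hJmem : ∀ z, z ∈ J ↔ argS1 (z - x') ≤ c := by
      intro z
      rw [hrepeq J hJ]
      exact mem_closedArc
    have hImem : ∀ z, z ∈ I ↔ Int.fract (argS1 (z - x') - a) ≤ Int.fract (b - a) := by
      intro z
      rw [hrepeq I hI, mem_closedArc,
        show z - x = (z - x') - (x - x') by abel,
        show y - x = (y - x') - (x - x') by abel,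
        argS1_sub (z - x') (x - x'), argS1_sub (y - x') (x - x'), ← ha, ← hb]
    rcases lt_or_ge b a with hba | hba
    · -- the complement of I lies close to x'; hence K₀ ⊆ I, a contradiction
      have hfr : Int.fract (b - a) = b - a + 1 := by
        have h1 : Int.fract (b - a) = Int.fract (b - a + 1) :=
          Int.fract_eq_fract.mpr ⟨-1, by push_cast; ring⟩
        rw [h1, Int.fract_eq_self.mpr ⟨by linarith, by linarith⟩]
      have hsub : ∀ z : S1, z ∉ I → argS1 (z - x') < δ := by
        intro z hz
        rw [hImem] at hz
        push_neg at hz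
        by_contra hzd
        push_neg at hzd
        have htza : a ≤ argS1 (z - x') := le_trans hlt.le hzd
        have htz1 : argS1 (z - x') < 1 := (argS1_mem_Ico _).2
        have heq : Int.fract (argS1 (z - x') - a) = argS1 (z - x') - a :=
          Int.fract_eq_self.mpr ⟨by linarith, by linarith⟩
        rw [heq, hfr] at hz
        linarith
      have hK₀I : K₀ ⊆ I := by
        intro z hz
        by_contra hzI
        exact hnear x' (hxmem J hJ) z (hsub z hzI) K₀ hK₀mem hK₀ne hz
      obtain ⟨z0, hz0⟩ := hK₀mem.1
      have hempty : I ∩ K₀ = ∅ := hI.1.2 K₀ hK₀mem hK₀ne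
      exact absurd hempty (by
        rw [Set.eq_empty_iff_forall_notMem]
        push_neg
        exact ⟨z0, hK₀I hz0, hz0⟩)
    · -- a ≤ b
      have hfrb : Int.fract (b - a) = b - a := Int.fract_eq_self.mpr ⟨by linarith, by linarith⟩
      have hIb : ∀ z, z ∈ I → argS1 (z - x') ≤ b := by
        intro z hz
        rw [hImem, hfrb] at hz
        have htz0 : 0 ≤ argS1 (z - x') := (argS1_mem_Ico _).1
        have htz1 : argS1 (z - x') < 1 := (argS1_mem_Ico _).2
        rcases lt_or_ge (argS1 (z - x')) a with h | h
        · have heq : Int.fract (argS1 (z - x') - a) = argS1 (z - x') - a + 1 := by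
            have h1 : Int.fract (argS1 (z - x') - a) = Int.fract (argS1 (z - x') - a + 1) :=
              Int.fract_eq_fract.mpr ⟨-1, by push_cast; ring⟩
            rw [h1, Int.fract_eq_self.mpr ⟨by linarith, by linarith⟩]
          rw [heq] at hz
          linarith
        · have heq : Int.fract (argS1 (z - x') - a) = argS1 (z - x') - a :=
            Int.fract_eq_self.mpr ⟨by linarith, by linarith⟩
          rw [heq] at hz
          linarith
      rcases le_or_gt b c with hbc | hbc
      · -- I ⊆ J, contradicting maximality of I
        have hIJ : I ⊆ J := fun z hz => (hJmem z).mpr (le_trans (hIb z hz) hbc)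
        exact hne (hI.2 J hJ.1 hIJ).symm
      · -- J ⊆ closedArc x' y which is a gap arc, contradicting maximality of J
        have hgap : IsGapArc F K (closedArc x' y) := by
          constructor
          · exact ⟨x', hxmem J hJ, y, hymem I hI, rfl⟩
          · intro K' hK' hKne'
            rw [Set.eq_empty_iff_forall_notMem]
            rintro z ⟨hzarc, hzK'⟩
            have htzb : argS1 (z - x') ≤ b := mem_closedArc.mp hzarc
            rcases lt_or_ge (argS1 (z - x')) δ with h | h
            · exact hnear x' (hxmem J hJ) z h K' hK' hKne' hzK'
            · have haz : a ≤ argS1 (z - x') := le_of_lt (lt_of_lt_of_le hlt h)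
              have htz1 : argS1 (z - x') < 1 := (argS1_mem_Ico _).2
              have hzI : z ∈ I := by
                rw [hImem, hfrb,
                  show Int.fract (argS1 (z - x') - a) = argS1 (z - x') - a from
                    Int.fract_eq_self.mpr ⟨by linarith, by linarith⟩]
                linarith
              have hempty : I ∩ K' = ∅ := hI.1.2 K' hK' hKne'
              exact absurd hempty (by
                rw [Set.eq_empty_iff_forall_notMem]
                push_neg
                exact ⟨z, hzI, hzK'⟩)
        have hJsub : J ⊆ closedArc x' y := by
          intro z hz
          rw [hJmem] at hz
          exact mem_closedArc.mpr (le_trans hz hbc.le)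
        have heq : closedArc x' y = J := hJ.2 _ hgap hJsub
        have hyJ : y ∈ closedArc x' y := mem_closedArc.mpr (le_refl _)
        rw [heq, hJmem] at hyJ
        linarith
  -- translate to separation of real arguments
  have sep2 : ∀ I ∈ EK F K, ∀ J ∈ EK F K, I ≠ J →
      δ ≤ |argS1 (xx I) - argS1 (xx J)| := by
    intro I hI J hJ hne
    have h1 := key I hI J hJ hne
    have h2 := key J hJ I hI (Ne.symm hne)
    set p := argS1 (xx I) with hp
    set q := argS1 (xx J) with hq
    have hp0 : 0 ≤ p := (argS1_mem_Ico _).1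
    have hp1 : p < 1 := (argS1_mem_Ico _).2
    have hq0 : 0 ≤ q := (argS1_mem_Ico _).1
    have hq1 : q < 1 := (argS1_mem_Ico _).2
    rw [argS1_sub, ← hp, ← hq] at h1
    rw [argS1_sub, ← hp, ← hq] at h2
    rcases lt_trichotomy p q with h | h | h
    · rw [Int.fract_eq_self.mpr ⟨by linarith, by linarith⟩] at h2
      rw [abs_of_neg (by linarith)]
      linarith
    · exfalso
      rw [h, sub_self, Int.fract_zero] at h1
      linarith
    · rw [Int.fract_eq_self.mpr ⟨by linarith, by linarith⟩] at h1
      rw [abs_of_pos (by linarith)]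
      linarith
  -- finiteness via an injection into a finite set of integers
  have hinj : Set.InjOn (fun I => (⌊argS1 (xx I) / δ⌋ : ℤ)) (EK F K) := by
    intro I hI J hJ hfl
    by_contra hne
    have hs := sep2 I hI J hJ hne
    simp only at hfl
    set p := argS1 (xx I)
    set q := argS1 (xx J)
    have hp1 : p / δ < ⌊q / δ⌋ + 1 := by rw [← hfl]; exact Int.lt_floor_add_one _
    have hp2 : (⌊q / δ⌋ : ℝ) ≤ p / δ := by rw [← hfl]; exact Int.floor_le _
    have hq1 : q / δ < ⌊q / δ⌋ + 1 := Int.lt_floor_add_one _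
    have hq2 : (⌊q / δ⌋ : ℝ) ≤ q / δ := Int.floor_le _
    have hep : p = p / δ * δ := (div_mul_cancel₀ p hδpos.ne').symm
    have heq : q = q / δ * δ := (div_mul_cancel₀ q hδpos.ne').symm
    have habs : |p - q| < δ := by
      rw [abs_sub_lt_iff]
      constructor
      · calc p - q = (p / δ - q / δ) * δ := by rw [sub_mul, ← hep, ← heq]
          _ < 1 * δ := by
            apply mul_lt_mul_of_pos_right _ hδpos
            linarith
          _ = δ := one_mul δ
      · calc q - p = (q / δ - p / δ) * δ := by rw [sub_mul, ← hep, ← heq]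
          _ < 1 * δ := by
            apply mul_lt_mul_of_pos_right _ hδpos
            linarith
          _ = δ := one_mul δ
    linarith
  have himg : ((fun I => (⌊argS1 (xx I) / δ⌋ : ℤ)) '' (EK F K)).Finite := by
    apply Set.Finite.subset (Set.finite_Icc (0 : ℤ) ⌈1 / δ⌉)
    rintro n ⟨I, hI, rfl⟩
    constructor
    · exact Int.floor_nonneg.mpr (div_nonneg (argS1_mem_Ico _).1 hδpos.le)
    · have h1 : argS1 (xx I) / δ ≤ 1 / δ := by
        gcongr
        exact (argS1_mem_Ico _).2.le
      exact (Int.floor_mono h1).trans (Int.floor_le_ceil _)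
  exact Set.Finite.of_finite_image himg hinj

end
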